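/- Let R be a real symmetric 4×4 matrix. Set R̂ = ηR, r = tr R̂, N̂ = R̂ - (r/4)·Id, let s be the unique real number with s³ = -(8/3)·tr(N̂³), and (assuming s ≠ 0) set Γ = (1/4)·Id - (1/s)·N̂. If s ≠ 0, Γ² = Γ, and xᵀ(ηΓ)x < 0 for some timelike vector x, then there exist a unit timelike vector u ∈ ℝ⁴ and real numbers ρ, p such that R = (ρ+p)(ηu)(ηu)ᵀ + ((ρ-p)/2)·η (the Ricci tensor of a perfect fluid with velocity u, energy density ρ and pressure p); moreover Γ = -u(ηu)ᵀ, ρ = (3s+r)/4, p = (s-r)/4, and ρ + p = s ≠ 0. -/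

import Mathlib

open Matrix

/-- The Minkowski metric matrix η = diag(-1,1,1,1) in an orthonormal frame of ℝ⁴. -/
noncomputable def η : Matrix (Fin 4) (Fin 4) ℝ := Matrix.diagonal ![-1, 1, 1, 1]

/-- Minkowski inner product ⟨x,y⟩ = xᵀ η y. -/
noncomputable def mink (x y : Fin 4 → ℝ) : ℝ := x ⬝ᵥ (η *ᵥ y)

lemma eta_sq : η * η = 1 := by
  rw [η, Matrix.diagonal_mul_diagonal]
  ext i j
  fin_cases i <;> fin_cases j <;> simp [Matrix.diagonal, Matrix.one_apply]

lemma eta_symm : η.transpose = η := by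
  rw [η, Matrix.diagonal_transpose]

/-- An idempotent matrix with zero trace is zero. -/
lemma idem_trace_zero {n : ℕ} (D : Matrix (Fin n) (Fin n) ℝ)
    (h : D * D = D) (ht : D.trace = 0) : D = 0 := by
  set f := D.mulVecLin with hf
  have hff : f ∘ₗ f = f := by
    rw [hf, ← Matrix.mulVecLin_mul, h]
  have hproj : LinearMap.IsProj (LinearMap.range f) f := by
    constructor
    · intro x; exact LinearMap.mem_range_self f x
    · rintro x ⟨y, rfl⟩
      have := congrFun (congrArg DFunLike.coe hff) y
      simpa using this
  have htr : LinearMap.trace ℝ (Fin n → ℝ) f = (Module.finrank ℝ (LinearMap.range f) : ℝ) :=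
    hproj.trace
  have htr2 : LinearMap.trace ℝ (Fin n → ℝ) f = D.trace := by
    rw [hf, ← Matrix.toLin'_apply' D, LinearMap.trace_eq_matrix_trace ℝ (Pi.basisFun ℝ (Fin n)),
      LinearMap.toMatrix_eq_toMatrix', LinearMap.toMatrix'_toLin']
  have hrk : Module.finrank ℝ (LinearMap.range f) = 0 := by
    have : ((Module.finrank ℝ (LinearMap.range f) : ℝ)) = 0 := by
      rw [← htr, htr2, ht]
    exact_mod_cast this
  have hrange : LinearMap.range f = ⊥ := Submodule.finrank_eq_zero.mp hrk
  have hf0 : f = 0 := LinearMap.range_eq_bot.mp hrange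
  ext i j
  have := congrFun (congrArg DFunLike.coe hf0) (Pi.single j 1)
  have h2 := congrFun this i
  have h3 : D *ᵥ (Pi.single j 1) = 0 :=
    congrFun (congrArg DFunLike.coe hf0) (Pi.single j 1)
  have := congrFun h3 i
  simpa [Matrix.mulVec_single] using this

theorem stmt_1 (R : Matrix (Fin 4) (Fin 4) ℝ) (hRsym : R.IsSymm)
    (r : ℝ) (hr : r = (η * R).trace)
    (N : Matrix (Fin 4) (Fin 4) ℝ) (hN : N = η * R - (r / 4) • 1)
    (s : ℝ) (hs3 : s ^ 3 = -(8 / 3) * (N ^ 3).trace)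
    (hs : s ≠ 0)
    (Γ : Matrix (Fin 4) (Fin 4) ℝ) (hΓ : Γ = (1 / 4 : ℝ) • 1 - (1 / s) • N)
    (hproj : Γ * Γ = Γ)
    (hx : ∃ x : Fin 4 → ℝ, mink x x < 0 ∧ x ⬝ᵥ ((η * Γ) *ᵥ x) < 0) :
    ∃ (u : Fin 4 → ℝ) (ρ p : ℝ), mink u u = -1 ∧
      R = (ρ + p) • vecMulVec (η *ᵥ u) (η *ᵥ u) + ((ρ - p) / 2) • η ∧
      Γ = -(vecMulVec u (η *ᵥ u)) ∧
      ρ = (3 * s + r) / 4 ∧ p = (s - r) / 4 ∧ ρ + p = s := by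
  obtain ⟨x, hx1, hx2⟩ := hx
  have hRs : R.transpose = R := hRsym
  -- helper identities for vecMulVec
  have hVV : ∀ (a b c d : Fin 4 → ℝ),
      vecMulVec a b * vecMulVec c d = (b ⬝ᵥ c) • vecMulVec a d := by
    intro a b c d
    ext i j
    simp only [Matrix.mul_apply, Matrix.vecMulVec_apply, Matrix.smul_apply, smul_eq_mul,
      dotProduct]
    rw [Finset.sum_congr rfl (fun k _ => show (a i * b k) * (c k * d j)
      = (b k * c k) * (a i * d j) by ring), ← Finset.sum_mul, Finset.sum_mul]
  have hMV : ∀ (A : Matrix (Fin 4) (Fin 4) ℝ) (b c : Fin 4 → ℝ),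
      A * vecMulVec b c = vecMulVec (A *ᵥ b) c := by
    intro A b c
    ext i j
    simp only [Matrix.mul_apply, Matrix.vecMulVec_apply, Matrix.mulVec, dotProduct,
      Finset.sum_mul]
    exact Finset.sum_congr rfl (fun k _ => by ring)
  have hVM : ∀ (b c : Fin 4 → ℝ) (A : Matrix (Fin 4) (Fin 4) ℝ),
      vecMulVec b c * A = vecMulVec b (c ᵥ* A) := by
    intro b c A
    ext i j
    simp only [Matrix.mul_apply, Matrix.vecMulVec_apply, Matrix.vecMul, dotProduct,
      Finset.mul_sum]
    exact Finset.sum_congr rfl (fun k _ => by ring)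
  have hTrV : ∀ (b c : Fin 4 → ℝ), (vecMulVec b c).trace = b ⬝ᵥ c := by
    intro b c
    simp [Matrix.trace, Matrix.diag, Matrix.vecMulVec_apply, dotProduct]
  -- symmetry of η * Γ
  have hηN : η * N = R - (r/4) • η := by
    rw [hN, Matrix.mul_sub, Matrix.mul_smul, mul_one, ← Matrix.mul_assoc, eta_sq, Matrix.one_mul]
  have hsymm : (η * Γ).transpose = η * Γ := by
    rw [hΓ, Matrix.mul_sub, Matrix.mul_smul, Matrix.mul_smul, mul_one, hηN]
    rw [Matrix.transpose_sub, Matrix.transpose_smul, Matrix.transpose_smul, eta_symm,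
      Matrix.transpose_sub, Matrix.transpose_smul, hRs, eta_symm]
  have hΓη : Γ.transpose * η = η * Γ := by
    rw [← hsymm, Matrix.transpose_mul, eta_symm]
  have hΓηΓ : Γ.transpose * η * Γ = η * Γ := by
    rw [hΓη, Matrix.mul_assoc, hproj]
  -- the timelike fixed vector
  set v := Γ *ᵥ x with hv
  have hΓv : Γ *ᵥ v = v := by
    rw [hv, Matrix.mulVec_mulVec, hproj]
  have hDD : ∀ (A B : Matrix (Fin 4) (Fin 4) ℝ) (y : Fin 4 → ℝ),
      (A *ᵥ y) ⬝ᵥ (B *ᵥ y) = y ⬝ᵥ ((A.transpose * B) *ᵥ y) := by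
    intro A B y
    rw [Matrix.dotProduct_mulVec y, ← Matrix.vecMul_vecMul, Matrix.vecMul_transpose,
      Matrix.dotProduct_mulVec]
  have hvv : mink v v = x ⬝ᵥ ((η * Γ) *ᵥ x) := by
    unfold mink
    rw [hv, Matrix.mulVec_mulVec, hDD, ← Matrix.mul_assoc, hΓηΓ]
  have hc : mink v v < 0 := by rw [hvv]; exact hx2
  set c := mink v v with hcc
  set a := Real.sqrt (-c) with haa
  have ha : 0 < a := Real.sqrt_pos.mpr (by linarith)
  have ha2 : a * a = -c := Real.mul_self_sqrt (by linarith)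
  have huu : mink (a⁻¹ • v) (a⁻¹ • v) = -1 := by
    unfold mink
    rw [Matrix.mulVec_smul, smul_dotProduct, dotProduct_smul]
    have hcv : v ⬝ᵥ (η *ᵥ v) = c := rfl
    rw [hcv, smul_eq_mul, smul_eq_mul]
    field_simp
    nlinarith [ha2]
  refine ⟨a⁻¹ • v, (3 * s + r) / 4, (s - r) / 4, huu, ?_, ?_, rfl, rfl, by ring⟩
  -- shared setup
  all_goals (
    set u := a⁻¹ • v with hu
    set w := η *ᵥ u with hw
    have hΓu : Γ *ᵥ u = u := by rw [hu, Matrix.mulVec_smul, hΓv]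
    have huw : u ⬝ᵥ w = -1 := huu
    have hwu : w ⬝ᵥ u = -1 := by rw [dotProduct_comm]; exact huw
    have hwΓ : w ᵥ* Γ = w := by
      rw [← Matrix.mulVec_transpose, hw, Matrix.mulVec_mulVec, hΓη, ← Matrix.mulVec_mulVec, hΓu]
    set P := -(vecMulVec u w) with hP
    have hPP : P * P = P := by
      rw [hP, neg_mul_neg, hVV, hwu, neg_one_smul]
    have hΓP : Γ * P = P := by rw [hP, Matrix.mul_neg, hMV, hΓu]
    have hPΓ : P * Γ = P := by rw [hP, Matrix.neg_mul, hVM, hwΓ]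
    have htrN : N.trace = 0 := by
      rw [hN, Matrix.trace_sub, Matrix.trace_smul, Matrix.trace_one, ← hr]
      simp
    have htrΓ : Γ.trace = 1 := by
      rw [hΓ, Matrix.trace_sub, Matrix.trace_smul, Matrix.trace_smul, Matrix.trace_one, htrN]
      simp
    have htrP : P.trace = 1 := by
      rw [hP, Matrix.trace_neg, hTrV, huw]; norm_num
    have hD : Γ - P = 0 := by
      apply idem_trace_zero
      · rw [Matrix.sub_mul, Matrix.mul_sub, Matrix.mul_sub, hproj, hΓP, hPΓ, hPP]
        abel
      · rw [Matrix.trace_sub, htrΓ, htrP]; ring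
    have hΓeqP : Γ = P := by rwa [sub_eq_zero] at hD
    first
    | exact hΓeqP
    | skip)
  -- remaining: the R equation
  · have hsc1 : (3 * s + r) / 4 + (s - r) / 4 = s := by ring
    have hsc2 : ((3 * s + r) / 4 - (s - r) / 4) / 2 = (s + r) / 4 := by ring
    rw [hsc1, hsc2]
    have hN2 : N = s • ((1/4 : ℝ) • (1 : Matrix (Fin 4) (Fin 4) ℝ) - Γ) := by
      have h1 : (1/s : ℝ) • N = (1/4 : ℝ) • (1 : Matrix (Fin 4) (Fin 4) ℝ) - Γ := by
        rw [hΓ]; abel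
      rw [← h1, smul_smul]
      field_simp
      rw [one_smul]
    have hηΓ : η * Γ = -(vecMulVec w w) := by
      rw [hΓeqP, hP, Matrix.mul_neg, hMV, ← hw]
    have hRfin : R = η * N + (r/4) • η := by
      have h2 : η * R = N + (r/4) • 1 := by rw [hN]; abel
      have h3 : η * (η * R) = R := by rw [← Matrix.mul_assoc, eta_sq, Matrix.one_mul]
      rw [← h3, h2, Matrix.mul_add, Matrix.mul_smul, mul_one]
    rw [hRfin, hN2, Matrix.mul_smul, Matrix.mul_sub, Matrix.mul_smul, mul_one, hηΓ]
    module
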